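/- Let 𝒜 be a pre-2-filtered 2-category and F a pseudofunctor from 𝒜 to Cat. Let (u₁, ξ₁, v₁) and (u₂, ξ₂, v₂) be premorphisms (A, x) → (B, y) with codomains C₁, C₂, and let w₁ : C₁ ⟶ C, w₂ : C₂ ⟶ C be 1-cells with invertible 2-cells α : v₁ ≫ w₁ ⟹ v₂ ≫ w₂ and β : u₁ ≫ w₁ ⟹ u₂ ≫ w₂. Then: (i) (u₁, ξ₁, v₁) is equivalent to the premorphism (u₁ ≫ w₁, F(w₁)(ξ₁) ≫ F(α)_y, v₂ ≫ w₂); (ii) the premorphism (u₁ ≫ w₁, F(β)ₓ ≫ F(w₂)(ξ₂), v₂ ≫ w₂) is equivalent to (u₂, ξ₂, v₂); and (iii) if α and β satisfy the LL equation F(w₁)(ξ₁) ≫ F(α)_y = F(β)ₓ ≫ F(w₂)(ξ₂), then (u₁, ξ₁, v₁) is equivalent to (u₂, ξ₂, v₂). -/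

import Mathlib

open CategoryTheory Bicategory CategoryTheory.Limits

universe w₂ v₂ u₂ w v u p p' t s t' s' t₁ s₁ t₂ s₂

namespace DubucStreet

variable {𝒜 : Type u} [Bicategory.{w, v} 𝒜]

/-- The LL equation for a pair of 2-cells `(α, β)` relative to `(γ₁, γ₂)`. -/
def LLeq {E A B C₁ C₂ C : 𝒜} (f : E ⟶ A) (g : E ⟶ B)
    {u₁ : A ⟶ C₁} {v₁ : B ⟶ C₁} {u₂ : A ⟶ C₂} {v₂ : B ⟶ C₂}
    (γ₁ : f ≫ u₁ ⟶ g ≫ v₁) (γ₂ : f ≫ u₂ ⟶ g ≫ v₂)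
    (w₁ : C₁ ⟶ C) (w₂ : C₂ ⟶ C)
    (α : v₁ ≫ w₁ ⟶ v₂ ≫ w₂) (β : u₁ ≫ w₁ ⟶ u₂ ≫ w₂) : Prop :=
  (α_ f u₁ w₁).inv ≫ (γ₁ ▷ w₁) ≫ (α_ g v₁ w₁).hom ≫ (g ◁ α) =
    (f ◁ β) ≫ (α_ f u₂ w₂).inv ≫ (γ₂ ▷ w₂) ≫ (α_ g v₂ w₂).hom

/-- Axiom F1 : every cospan of 1-cells can be completed to a square with an
invertible 2-cell. -/
def AxiomF1 (𝒜 : Type u) [Bicategory.{w, v} 𝒜] : Prop :=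
  ∀ {E A B : 𝒜} (f : E ⟶ A) (g : E ⟶ B),
    ∃ (C : 𝒜) (u : A ⟶ C) (v : B ⟶ C), Nonempty (f ≫ u ≅ g ≫ v)

/-- Axiom F2 : any two 2-cells as below can be equalized by a pair of invertible
2-cells satisfying the LL equation. -/
def AxiomF2 (𝒜 : Type u) [Bicategory.{w, v} 𝒜] : Prop :=
  ∀ {E A B C₁ C₂ : 𝒜} {f : E ⟶ A} {g : E ⟶ B}
    {u₁ : A ⟶ C₁} {v₁ : B ⟶ C₁} {u₂ : A ⟶ C₂} {v₂ : B ⟶ C₂}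
    (γ₁ : f ≫ u₁ ⟶ g ≫ v₁) (γ₂ : f ≫ u₂ ⟶ g ≫ v₂),
    ∃ (C : 𝒜) (w₁ : C₁ ⟶ C) (w₂ : C₂ ⟶ C)
      (α : v₁ ≫ w₁ ≅ v₂ ≫ w₂) (β : u₁ ≫ w₁ ≅ u₂ ≫ w₂),
      LLeq f g γ₁ γ₂ w₁ w₂ α.hom β.hom

/-- A premorphism `(A, x) → (B, y)` : a cospan `u : A ⟶ C`, `v : B ⟶ C` together with a
morphism `ξ : F(u)(x) ⟶ F(v)(y)` in `F(C)`. -/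
structure Premor (F : Pseudofunctor 𝒜 Cat.{v₂, u₂}) (A B : 𝒜) (x : F.obj A) (y : F.obj B) where
  cod : 𝒜
  u : A ⟶ cod
  v : B ⟶ cod
  ξ : (F.map u).toFunctor.obj x ⟶ (F.map v).toFunctor.obj y

/-- The LL equation for homotopy data `(w₁, w₂, α, β)` between two premorphisms :
`F(w₁)(ξ₁) ≫ F(α)_y = F(β)_x ≫ F(w₂)(ξ₂)`, all identifications being made via the
compositor isomorphisms of `F`. -/
def HomotopyLL (F : Pseudofunctor 𝒜 Cat.{v₂, u₂}) {A B : 𝒜} {x : F.obj A} {y : F.obj B}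
    (p q : Premor F A B x y) {V : 𝒜} (w₁ : p.cod ⟶ V) (w₂ : q.cod ⟶ V)
    (α : p.v ≫ w₁ ⟶ q.v ≫ w₂) (β : p.u ≫ w₁ ⟶ q.u ≫ w₂) : Prop :=
  (F.map w₁).toFunctor.map p.ξ ≫ (F.mapComp p.v w₁).inv.toNatTrans.app y ≫ (F.map₂ α).toNatTrans.app y ≫
      (F.mapComp q.v w₂).hom.toNatTrans.app y =
    (F.mapComp p.u w₁).inv.toNatTrans.app x ≫ (F.map₂ β).toNatTrans.app x ≫ (F.mapComp q.u w₂).hom.toNatTrans.app x ≫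
      (F.map w₂).toFunctor.map q.ξ

/-- A homotopy `(w₁, w₂, α, β)` between two premorphisms. -/
structure Homotopy (F : Pseudofunctor 𝒜 Cat.{v₂, u₂}) {A B : 𝒜} {x : F.obj A} {y : F.obj B}
    (p q : Premor F A B x y) where
  vertex : 𝒜
  w₁ : p.cod ⟶ vertex
  w₂ : q.cod ⟶ vertex
  α : p.v ≫ w₁ ≅ q.v ≫ w₂
  β : p.u ≫ w₁ ≅ q.u ≫ w₂
  ll : HomotopyLL F p q w₁ w₂ α.hom β.hom

/-- Two premorphisms are equivalent when there is a homotopy from one to the other. -/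
def PreEquiv (F : Pseudofunctor 𝒜 Cat.{v₂, u₂}) {A B : 𝒜} {x : F.obj A} {y : F.obj B}
    (p q : Premor F A B x y) : Prop :=
  Nonempty (Homotopy F p q)

section Aux

variable (F : Pseudofunctor 𝒜 Cat.{v₂, u₂})

lemma map₂_inv_hom_app_assoc {a b : 𝒜} {f g : a ⟶ b} (η : f ≅ g) (z : F.obj a)
    {c : F.obj b} (k : (F.map g).toFunctor.obj z ⟶ c) :
    (F.map₂ η.inv).toNatTrans.app z ≫ (F.map₂ η.hom).toNatTrans.app z ≫ k = k := by
  rw [← Category.assoc, ← Cat.Hom₂.comp_app, F.map₂_inv_hom, Cat.Hom₂.id_app, Category.id_comp]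

lemma mapId_inv_naturality_assoc (c : 𝒜) {a b : F.obj c} (h : a ⟶ b)
    {d : ↑(F.obj c)} (k : (F.map (𝟙 c)).toFunctor.obj b ⟶ d) :
    (F.mapId c).inv.toNatTrans.app a ≫ (F.map (𝟙 c)).toFunctor.map h ≫ k = h ≫ (F.mapId c).inv.toNatTrans.app b ≫ k := by
  rw [← Category.assoc, ← Category.assoc]
  congr 1
  exact ((F.mapId c).inv.toNatTrans.naturality h).symm

lemma mapId_hom_naturality_assoc (c : 𝒜) {a b : F.obj c} (h : a ⟶ b)
    {d : ↑(F.obj c)} (k : b ⟶ d) :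
    (F.map (𝟙 c)).toFunctor.map h ≫ (F.mapId c).hom.toNatTrans.app b ≫ k = (F.mapId c).hom.toNatTrans.app a ≫ h ≫ k := by
  rw [← Category.assoc, ← Category.assoc]
  congr 1
  exact (F.mapId c).hom.toNatTrans.naturality h

lemma mapId_inv_naturality (c : 𝒜) {a b : F.obj c} (h : a ⟶ b) :
    (F.mapId c).inv.toNatTrans.app a ≫ (F.map (𝟙 c)).toFunctor.map h = h ≫ (F.mapId c).inv.toNatTrans.app b :=
  ((F.mapId c).inv.toNatTrans.naturality h).symm

lemma mapId_hom_naturality (c : 𝒜) {a b : F.obj c} (h : a ⟶ b) :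
    (F.map (𝟙 c)).toFunctor.map h ≫ (F.mapId c).hom.toNatTrans.app b = (F.mapId c).hom.toNatTrans.app a ≫ h :=
  (F.mapId c).hom.toNatTrans.naturality h

end Aux

/-- Lemma on basic equivalences : (i) `(u₁, ξ₁, v₁)` is equivalent to
`(u₁ ≫ w₁, F(w₁)(ξ₁) ≫ F(α)_y, v₂ ≫ w₂)`; (ii) `(u₁ ≫ w₁, F(β)ₓ ≫ F(w₂)(ξ₂), v₂ ≫ w₂)`
is equivalent to `(u₂, ξ₂, v₂)`; and (iii) when `(α, β)` satisfies the LL equation,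
`(u₁, ξ₁, v₁)` is equivalent to `(u₂, ξ₂, v₂)`. -/
theorem basic_equivalences [Bicategory.Strict 𝒜]
    (h1 : AxiomF1 𝒜) (h2 : AxiomF2 𝒜)
    (F : Pseudofunctor 𝒜 Cat.{v₂, u₂}) {A B : 𝒜} {x : F.obj A} {y : F.obj B}
    {C₁ C₂ C : 𝒜} (u₁ : A ⟶ C₁) (v₁ : B ⟶ C₁)
    (ξ₁ : (F.map u₁).toFunctor.obj x ⟶ (F.map v₁).toFunctor.obj y)
    (u₂ : A ⟶ C₂) (v₂ : B ⟶ C₂) (ξ₂ : (F.map u₂).toFunctor.obj x ⟶ (F.map v₂).toFunctor.obj y)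
    (w₁ : C₁ ⟶ C) (w₂ : C₂ ⟶ C) (α : v₁ ≫ w₁ ≅ v₂ ≫ w₂) (β : u₁ ≫ w₁ ≅ u₂ ≫ w₂) :
    PreEquiv F (⟨C₁, u₁, v₁, ξ₁⟩ : Premor F A B x y)
      (⟨C, u₁ ≫ w₁, v₂ ≫ w₂,
        (F.mapComp u₁ w₁).hom.toNatTrans.app x ≫ (F.map w₁).toFunctor.map ξ₁ ≫
          (F.mapComp v₁ w₁).inv.toNatTrans.app y ≫ (F.map₂ α.hom).toNatTrans.app y⟩ : Premor F A B x y) ∧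
    PreEquiv F
      (⟨C, u₁ ≫ w₁, v₂ ≫ w₂,
        (F.map₂ β.hom).toNatTrans.app x ≫ (F.mapComp u₂ w₂).hom.toNatTrans.app x ≫
          (F.map w₂).toFunctor.map ξ₂ ≫ (F.mapComp v₂ w₂).inv.toNatTrans.app y⟩ : Premor F A B x y)
      (⟨C₂, u₂, v₂, ξ₂⟩ : Premor F A B x y) ∧
    (HomotopyLL F (⟨C₁, u₁, v₁, ξ₁⟩ : Premor F A B x y)
        (⟨C₂, u₂, v₂, ξ₂⟩ : Premor F A B x y) w₁ w₂ α.hom β.hom →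
      PreEquiv F (⟨C₁, u₁, v₁, ξ₁⟩ : Premor F A B x y)
        (⟨C₂, u₂, v₂, ξ₂⟩ : Premor F A B x y)) := by
  refine ⟨⟨⟨C, w₁, 𝟙 C, α ≪≫ (ρ_ _).symm, (ρ_ _).symm, ?_⟩⟩,
    ⟨⟨C, 𝟙 C, w₂, ρ_ _, (ρ_ _) ≪≫ β, ?_⟩⟩,
    fun hll => ⟨⟨C, w₁, w₂, α, β, hll⟩⟩⟩
  · simp only [HomotopyLL, Iso.trans_hom, Iso.symm_hom, PrelaxFunctor.map₂_comp,
      Pseudofunctor.mapComp_id_right_hom, Pseudofunctor.mapComp_id_right_inv,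
      Cat.Hom₂.comp_app, Cat.whiskerLeft_app, Cat.rightUnitor_hom_app,
      Cat.rightUnitor_inv_app, eqToHom_refl, Category.comp_id, Category.id_comp,
      Category.assoc, Functor.map_comp]
    simp only [map₂_inv_hom_app_assoc, mapId_inv_naturality_assoc,
      mapId_hom_naturality_assoc, mapId_inv_naturality, mapId_hom_naturality, Cat.Hom.inv_hom_id_toNatTrans_app_assoc, Cat.Hom.inv_hom_id_toNatTrans_app,
      Category.assoc, Category.comp_id]
  · simp only [HomotopyLL, Iso.trans_hom, Iso.symm_hom, PrelaxFunctor.map₂_comp,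
      Pseudofunctor.mapComp_id_right_hom, Pseudofunctor.mapComp_id_right_inv,
      Cat.Hom₂.comp_app, Cat.whiskerLeft_app, Cat.rightUnitor_hom_app,
      Cat.rightUnitor_inv_app, eqToHom_refl, Category.comp_id, Category.id_comp,
      Category.assoc, Functor.map_comp]
    simp only [map₂_inv_hom_app_assoc, mapId_inv_naturality_assoc,
      mapId_hom_naturality_assoc, mapId_inv_naturality, mapId_hom_naturality, Cat.Hom.inv_hom_id_toNatTrans_app_assoc, Cat.Hom.inv_hom_id_toNatTrans_app,
      Category.assoc, Category.comp_id]
    simp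

end DubucStreet
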